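/- Let x, y be positive integers such that x divides y. Then the Euclidean chain function satisfies F(x, y) = 1 + y/x. -/

import Mathlib

/-- One step of the Euclidean chain: the least nonnegative residue of `-a` modulo
`b` when `b ∉ {0, 1}`, and `0` otherwise. -/
def chainNext (a b : ℕ) : ℕ := if b = 0 ∨ b = 1 then 0 else (b - a % b) % b

/-- The Euclidean chain with initial terms `x_1 = x₁` and `x_2 = x₂`, defined by
`x_{i+1} = (-x_{i-1}) mod x_i` if `x_i ∉ {0,1}` and `x_{i+1} = 0` otherwise
(the value at index `0` is junk). -/
def chain (x₁ x₂ : ℕ) : ℕ → ℕ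
  | 0 => 0
  | 1 => x₁
  | 2 => x₂
  | n + 3 => chainNext (chain x₁ x₂ (n + 1)) (chain x₁ x₂ (n + 2))

/-- The Euclidean chain function `F(x₁, x₂)`: the largest index `i` with
`x_i ≠ 0`, i.e. the number of positive terms of the Euclidean chain. -/
noncomputable def euclidF (x₁ x₂ : ℕ) : ℕ := sSup {i | chain x₁ x₂ i ≠ 0}

/-- If `x` and `y` are positive integers with `x ∣ y`, then the
Euclidean chain function satisfies `F(x, y) = 1 + y / x`. -/
lemma step2 (x m : ℕ) (hx : 0 < x) : chainNext ((m + 1) * x) (m * x) = (m - 1) * x := by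
  match m with
  | 0 => simp [chainNext]
  | 1 =>
    simp only [chainNext, one_mul]
    rcases eq_or_lt_of_le (show 1 ≤ x from hx) with h | h
    · simp [← h]
    · have hx0 : x ≠ 0 := by omega
      have hx1 : x ≠ 1 := by omega
      simp [hx0, hx1, Nat.mul_mod_left, Nat.mod_self]
  | (m + 2) =>
    have hb2 : 2 ≤ (m + 2) * x := by nlinarith
    have hb0 : (m + 2) * x ≠ 0 := by omega
    have hb1 : (m + 2) * x ≠ 1 := by omega
    simp only [chainNext, hb0, hb1, or_self, if_false]
    have hlt : x < (m + 2) * x := by nlinarith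
    have hmod : ((m + 3) * x) % ((m + 2) * x) = x := by
      have : (m + 3) * x = x + (m + 2) * x := by ring
      rw [this, Nat.add_mod_right, Nat.mod_eq_of_lt hlt]
    rw [hmod]
    have hsub : (m + 2) * x - x = (m + 1) * x := by
      have : (m + 2) * x = (m + 1) * x + x := by ring
      omega
    rw [hsub, Nat.mod_eq_of_lt (by nlinarith)]
    congr 1

lemma step1 (x k : ℕ) (hx : 0 < x) (hk : 0 < k) : chainNext x (k * x) = (k - 1) * x := by
  match k with
  | 1 =>
    simp only [chainNext, one_mul]
    rcases eq_or_lt_of_le (show 1 ≤ x from hx) with h | h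
    · simp [← h]
    · have hx0 : x ≠ 0 := by omega
      have hx1 : x ≠ 1 := by omega
      simp [hx0, hx1, Nat.mod_self]
  | (k + 2) =>
    have hb2 : 2 ≤ (k + 2) * x := by nlinarith
    have hb0 : (k + 2) * x ≠ 0 := by omega
    have hb1 : (k + 2) * x ≠ 1 := by omega
    simp only [chainNext, hb0, hb1, or_self, if_false]
    have hlt : x < (k + 2) * x := by nlinarith
    rw [Nat.mod_eq_of_lt hlt]
    have hsub : (k + 2) * x - x = (k + 1) * x := by
      have : (k + 2) * x = (k + 1) * x + x := by ring
      omega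
    rw [hsub, Nat.mod_eq_of_lt (by nlinarith)]
    congr 1

lemma chain_formula (x k : ℕ) (hx : 0 < x) (hk : 0 < k) :
    ∀ j, chain x (k * x) (j + 2) = (k - j) * x := by
  intro j
  induction j using Nat.strong_induction_on with
  | _ j ih =>
    match j with
    | 0 => simp [chain]
    | 1 =>
      show chain x (k * x) 3 = _
      rw [show (3:ℕ) = 0 + 3 by rfl, chain]
      show chainNext (chain x (k*x) 1) (chain x (k*x) 2) = _
      rw [show chain x (k*x) 1 = x from rfl, show chain x (k*x) 2 = k * x from rfl]
      exact step1 x k hx hk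
    | (j + 2) =>
      have h1 := ih j (by omega)
      have h2 := ih (j + 1) (by omega)
      rw [show j + 2 + 2 = (j + 1) + 3 by ring, chain, h1, h2]
      by_cases hjk : j + 1 ≤ k
      · have e1 : k - j = (k - (j + 1)) + 1 := by omega
        rw [e1, step2 x (k - (j+1)) hx]
        have e2 : k - (j + 1) - 1 = k - (j + 2) := by omega
        rw [e2]
      · have e1 : k - (j + 1) = 0 := by omega
        rw [e1, zero_mul]
        simp [chainNext]
        omega

theorem euclidF_of_dvd (x y : ℕ) (hx : 0 < x) (hy : 0 < y) (hxy : x ∣ y) :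
    euclidF x y = 1 + y / x := by
  obtain ⟨k, rfl⟩ := hxy
  have hk : 0 < k := by
    rcases Nat.eq_zero_or_pos k with h | h
    · simp [h] at hy
    · exact h
  rw [mul_comm] at *
  have hdiv : k * x / x = k := Nat.mul_div_cancel k hx
  rw [hdiv]
  have hform := chain_formula x k hx hk
  have hbound : ∀ i ∈ {i | chain x (k * x) i ≠ 0}, i ≤ k + 1 := by
    intro i hi
    by_contra hcon
    have hi2 : i = (i - 2) + 2 := by omega
    have := hform (i - 2)
    rw [← hi2] at this
    apply hi
    rw [this]
    have : k - (i - 2) = 0 := by omega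
    simp [this]
  have hmem : k + 1 ∈ {i | chain x (k * x) i ≠ 0} := by
    show chain x (k * x) (k + 1) ≠ 0
    have : k + 1 = (k - 1) + 2 := by omega
    rw [this, hform]
    have : k - (k - 1) = 1 := by omega
    rw [this, one_mul]
    omega
  have : sSup {i | chain x (k * x) i ≠ 0} = k + 1 := by
    apply le_antisymm
    · exact csSup_le ⟨k + 1, hmem⟩ hbound
    · exact le_csSup ⟨k + 1, hbound⟩ hmem
  rw [euclidF, this]
  omega
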